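/- Let (X_n)_{n∈ℕ} be an i.i.d. sequence of ℝ^k-valued random vectors with common distribution μ, and let E = {X_1, X_2, ...}. Then almost surely the closure of E (in the Euclidean topology of ℝ^k) equals the heavy set H(μ); i.e., the closure of an infinite random sample is almost surely the deterministic set of heavy points of the distribution. -/

import Mathlib

open scoped ENNReal
open MeasureTheory Filter Topology ProbabilityTheory

theorem closure_sample_eq_heavy_set (k : ℕ) {Ω : Type*} [MeasurableSpace Ω]
    (P : Measure Ω) [IsProbabilityMeasure P]
    (μ : Measure (EuclideanSpace ℝ (Fin k))) [IsProbabilityMeasure μ]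
    (X : ℕ → Ω → EuclideanSpace ℝ (Fin k))
    (hmeas : ∀ n, Measurable (X n))
    (hindep : ProbabilityTheory.iIndepFun X P)
    (hdist : ∀ n, Measure.map (X n) P = μ) :
    ∀ᵐ ω ∂P, closure (Set.range fun n => X n ω) =
      {x : EuclideanSpace ℝ (Fin k) |
        ∀ U : Set (EuclideanSpace ℝ (Fin k)), IsOpen U → x ∈ U → 0 < μ U} := by
  classical
  set S : Set (EuclideanSpace ℝ (Fin k)) := {x | ∀ U : Set (EuclideanSpace ℝ (Fin k)), IsOpen U → x ∈ U → 0 < μ U} with hSdef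
  set B : Set (Set (EuclideanSpace ℝ (Fin k))) := TopologicalSpace.countableBasis (EuclideanSpace ℝ (Fin k)) with hBdef
  have hB : TopologicalSpace.IsTopologicalBasis B :=
    TopologicalSpace.isBasis_countableBasis (EuclideanSpace ℝ (Fin k))
  have hBc : B.Countable := TopologicalSpace.countable_countableBasis (EuclideanSpace ℝ (Fin k))
  -- S is closed
  have hSc_open : IsOpen Sᶜ := by
    rw [isOpen_iff_mem_nhds]
    intro x hx
    simp only [Set.mem_compl_iff, hSdef, Set.mem_setOf_eq, not_forall] at hx
    obtain ⟨U, hUo, hxU, hU0⟩ := hx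
    have hU0' : μ U = 0 := by simpa using hU0
    refine Filter.mem_of_superset (hUo.mem_nhds hxU) ?_
    intro y hy hyS
    exact absurd (hyS U hUo hy).ne' (by simp [hU0'])
  have hSclosed : IsClosed S := by
    rw [← isOpen_compl_iff]; exact hSc_open
  -- μ Sᶜ = 0
  have hScnull : μ Sᶜ = 0 := by
    have hsub : Sᶜ ⊆ ⋃ U ∈ {U ∈ B | μ U = 0}, U := by
      intro x hx
      simp only [Set.mem_compl_iff, hSdef, Set.mem_setOf_eq, not_forall] at hx
      obtain ⟨U, hUo, hxU, hU0⟩ := hx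
      have hU0' : μ U = 0 := by simpa using hU0
      obtain ⟨V, hVB, hxV, hVU⟩ := hB.exists_subset_of_mem_open hxU hUo
      exact Set.mem_biUnion ⟨hVB, measure_mono_null hVU hU0'⟩ hxV
    refine measure_mono_null hsub ?_
    refine (measure_biUnion_null_iff (hBc.mono (Set.sep_subset _ _))).2 ?_
    intro U hU; exact hU.2
  -- a.s. all samples are in S
  have hallS : ∀ᵐ ω ∂P, ∀ n, X n ω ∈ S := by
    rw [ae_all_iff]
    intro n
    have : P ((X n) ⁻¹' Sᶜ) = 0 := by
      have := Measure.map_apply (hmeas n) hSc_open.measurableSet (f := X n) (μ := P)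
      rw [hdist n] at this
      rw [← this, hScnull]
    rw [ae_iff]
    convert this using 2
    rfl
  -- for each basis set of positive measure, a.s. some sample hits it
  have hhit : ∀ᵐ ω ∂P, ∀ U ∈ {U ∈ B | μ U ≠ 0}, ∃ n, X n ω ∈ U := by
    rw [ae_ball_iff (hBc.mono (Set.sep_subset _ _))]
    rintro U ⟨hUB, hU0⟩
    have hUo : IsOpen U := hB.isOpen hUB
    have hUm : MeasurableSet U := hUo.measurableSet
    set s : ℕ → Set Ω := fun n => (X n) ⁻¹' U with hsdef
    have hsm : ∀ n, MeasurableSet (s n) := fun n => (hmeas n) hUm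
    have hsP : ∀ n, P (s n) = μ U := by
      intro n
      rw [← hdist n, Measure.map_apply (hmeas n) hUm]
    have hsindep : iIndepSet s P := by
      rw [iIndepSet_iff_meas_biInter hsm]
      intro t
      exact hindep.measure_inter_preimage_eq_mul t (sets := fun _ => U) (fun i _ => hUm)
    have hsum : (∑' n, P (s n)) = ∞ := by
      simp only [hsP]
      exact ENNReal.tsum_const_eq_top_of_ne_zero hU0
    have hone := measure_limsup_eq_one hsm hsindep hsum
    have hml : MeasurableSet (limsup s atTop) := MeasurableSet.measurableSet_limsup hsm
    have : P (limsup s atTop)ᶜ = 0 := by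
      rw [measure_compl hml (measure_ne_top _ _), hone, measure_univ, tsub_self]
    filter_upwards [(ae_iff.2 (by exact this) :
        ∀ᵐ ω ∂P, ω ∈ limsup s atTop)] with ω hω
    rw [mem_limsup_iff_frequently_mem] at hω
    obtain ⟨n, -, hn⟩ := (frequently_atTop.1 hω) 0
    exact ⟨n, hn⟩
  filter_upwards [hallS, hhit] with ω h1 h2
  apply Set.Subset.antisymm
  · exact closure_minimal (by rintro _ ⟨n, rfl⟩; exact h1 n) hSclosed
  · intro x hx
    rw [mem_closure_iff]
    intro V hV hxV
    obtain ⟨U, hUB, hxU, hUV⟩ := hB.exists_subset_of_mem_open hxV hV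
    have hpos := hx U (hB.isOpen hUB) hxU
    obtain ⟨n, hn⟩ := h2 U ⟨hUB, hpos.ne'⟩
    exact ⟨X n ω, hUV hn, n, rfl⟩
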